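/- For 0 < d < 1, the alternating series ∑_{m=1}^∞ (−1)^m [1/(m − d)² − 1/(m + d)²] converges to a negative value. In particular, −1/d² + ∑_{m=1}^∞ (−1)^m [1/(m − d)² − 1/(m + d)²] < 0. -/
import Mathlib

lemma key12 (d x : ℝ) (hd : 0 < d) (hd1 : d < 1) (hx : 1 ≤ x) :
    1/((x+1)-d)^2 - 1/((x+1)+d)^2 < 1/(x-d)^2 - 1/(x+d)^2 := by
  have h1 : 0 < x - d := by linarith
  have h2 : 0 < x + d := by linarith
  have h3 : 0 < (x+1) - d := by linarith
  have h4 : 0 < (x+1) + d := by linarith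
  have hA : 0 < x^2 - d^2 := by nlinarith
  have hA2 : x^2 - d^2 < x*(2*x+1) := by nlinarith
  rw [div_sub_div _ _ (by positivity) (by positivity), div_sub_div _ _ (by positivity) (by positivity), div_lt_div_iff₀ (by positivity) (by positivity)]
  nlinarith [mul_lt_mul_of_pos_left hA2 hA, mul_pos hd hA,
    mul_pos (mul_pos hd (lt_of_lt_of_le one_pos hx)) hA]

set_option maxHeartbeats 1000000 in
theorem stmt_12 (d : ℝ) (hd : 0 < d) (hd1 : d < 1) :
    Summable (fun m : ℕ => (-1:ℝ)^(m+1) * (1/(((m:ℝ)+1) - d)^2 - 1/(((m:ℝ)+1) + d)^2)) ∧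
    (∑' m : ℕ, (-1:ℝ)^(m+1) * (1/(((m:ℝ)+1) - d)^2 - 1/(((m:ℝ)+1) + d)^2)) < 0 ∧
    -1/d^2 + (∑' m : ℕ, (-1:ℝ)^(m+1) * (1/(((m:ℝ)+1) - d)^2 - 1/(((m:ℝ)+1) + d)^2)) < 0 := by
  set g : ℕ → ℝ := fun m => 1/(((m:ℝ)+1) - d)^2 - 1/(((m:ℝ)+1) + d)^2 with hgdef
  set f : ℕ → ℝ := fun m => (-1:ℝ)^(m+1) * g m with hfdef
  have hpos1 : ∀ m : ℕ, (0:ℝ) < ((m:ℝ)+1) - d := by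
    intro m
    have : (0:ℝ) ≤ (m:ℝ) := Nat.cast_nonneg m
    linarith
  have hpos2 : ∀ m : ℕ, (0:ℝ) < ((m:ℝ)+1) + d := by
    intro m
    have : (0:ℝ) ≤ (m:ℝ) := Nat.cast_nonneg m
    linarith
  have hgnn : ∀ m : ℕ, 0 ≤ g m := by
    intro m
    have h1 := hpos1 m
    have h2 := hpos2 m
    have : ((m:ℝ)+1) - d ≤ ((m:ℝ)+1) + d := by linarith
    have := one_div_le_one_div_of_le (by positivity) (pow_le_pow_left₀ h1.le this 2)
    simp only [hgdef]
    linarith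
  -- summability
  have hsum2 : Summable (fun m : ℕ => (1/(1-d)^2) * (1/((m:ℝ)+1)^2)) := by
    apply Summable.mul_left
    have : Summable (fun n : ℕ => 1/((n:ℝ))^2) :=
      Real.summable_one_div_nat_pow.mpr one_lt_two
    have := (summable_nat_add_iff 1).mpr this
    simpa using this
  have hg : Summable g := by
    apply Summable.of_nonneg_of_le hgnn _ hsum2
    intro m
    have h1 := hpos1 m
    have h2 := hpos2 m
    have hb : (1-d)*((m:ℝ)+1) ≤ ((m:ℝ)+1) - d := by
      have : (0:ℝ) ≤ (m:ℝ) := Nat.cast_nonneg m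
      nlinarith
    have hbpos : (0:ℝ) < (1-d)*((m:ℝ)+1) := by
      have : (0:ℝ) ≤ (m:ℝ) := Nat.cast_nonneg m
      nlinarith
    have h3 : 1/(((m:ℝ)+1) - d)^2 ≤ 1/((1-d)*((m:ℝ)+1))^2 :=
      one_div_le_one_div_of_le (by positivity) (pow_le_pow_left₀ hbpos.le hb 2)
    have h4 : 0 < 1/(((m:ℝ)+1) + d)^2 := by positivity
    have heq : (1/(1-d)^2) * (1/((m:ℝ)+1)^2) = 1/((1-d)*((m:ℝ)+1))^2 := by
      rw [div_mul_div_comm, one_mul, mul_pow]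
    simp only [hgdef]
    rw [heq]
    linarith
  have hnorm : ∀ m : ℕ, ‖f m‖ = g m := by
    intro m
    simp only [hfdef]
    rw [norm_mul, norm_pow, norm_neg, norm_one, one_pow, one_mul,
      Real.norm_eq_abs, abs_of_nonneg (hgnn m)]
  have hf : Summable f := Summable.of_norm (by simp only [hnorm]; exact hg)
  -- strict decrease of g at odd/even pairs
  have hstep : ∀ k : ℕ, g (2*k+1) < g (2*k) := by
    intro k
    have hk : (0:ℝ) ≤ (k:ℝ) := Nat.cast_nonneg k
    have hh := key12 d (2*(k:ℝ)+1) hd hd1 (by linarith)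
    have e1 : ((2*k+1:ℕ):ℝ)+1 = (2*(k:ℝ)+1)+1 := by push_cast; ring
    have e2 : ((2*k:ℕ):ℝ)+1 = 2*(k:ℝ)+1 := by push_cast; ring
    simp only [hgdef, e1, e2]
    exact hh
  have hge : Summable (fun k : ℕ => g (2*k)) :=
    hg.comp_injective (fun a b h => by omega)
  have hgo : Summable (fun k : ℕ => g (2*k+1)) :=
    hg.comp_injective (fun a b h => by omega)
  have hlt : (∑' k : ℕ, g (2*k+1)) < ∑' k : ℕ, g (2*k) :=
    Summable.tsum_lt_tsum (fun k => (hstep k).le) (hstep 0) hgo hge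
  have heven : ∀ k : ℕ, f (2*k) = -g (2*k) := by
    intro k
    simp only [hfdef]
    rw [pow_succ, pow_mul]
    simp
  have hodd : ∀ k : ℕ, f (2*k+1) = g (2*k+1) := by
    intro k
    simp only [hfdef]
    rw [pow_succ, pow_succ, pow_mul]
    simp
  have hfe : Summable (fun k : ℕ => f (2*k)) :=
    hf.comp_injective (fun a b h => by omega)
  have hfo : Summable (fun k : ℕ => f (2*k+1)) :=
    hf.comp_injective (fun a b h => by omega)
  have heo := tsum_even_add_odd hfe hfo
  have h1 : (∑' k : ℕ, f (2*k)) = -(∑' k : ℕ, g (2*k)) := by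
    rw [← tsum_neg]; exact tsum_congr heven
  have h2 : (∑' k : ℕ, f (2*k+1)) = ∑' k : ℕ, g (2*k+1) := tsum_congr hodd
  have hT : (∑' m : ℕ, f m) < 0 := by
    rw [← heo, h1, h2]; linarith
  have hdpos : (0:ℝ) < 1/d^2 := by positivity
  exact ⟨hf, hT, add_neg_of_neg_of_nonpos (by rw [neg_div]; linarith) hT.le⟩
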